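/- Let B be a k-by-k reciprocal matrix with row sums r₁ ≥ r₂ ≥ ⋯ ≥ r_k, and define f(x) = 1/x + 1/(r₁−r₂+x) + ⋯ + 1/(r₁−r_k+x) + 1 − r₁ − x for x > 0. Then f(1) ≤ 0, with equality if and only if B is the all-ones matrix. In particular, if f(x) = 0 for some x > 0, then x ≤ 1. -/
import Mathlib


open Matrix BigOperators Finset

/-- A positive square matrix is reciprocal if `A j i = 1 / A i j` for all `i, j`. -/
def IsReciprocal {n : ℕ} (A : Matrix (Fin n) (Fin n) ℝ) : Prop :=
  (∀ i j, 0 < A i j) ∧ ∀ i j, A j i = 1 / A i j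

/-- A reciprocal matrix is consistent if `A i j * A j k = A i k` for all `i, j, k`. -/
def IsConsistent {n : ℕ} (A : Matrix (Fin n) (Fin n) ℝ) : Prop :=
  IsReciprocal A ∧ ∀ i j k, A i j * A j k = A i k

/-- A vector is positive if all its entries are positive. -/
def PosVec {n : ℕ} (w : Fin n → ℝ) : Prop := ∀ i, 0 < w i

/-- A positive vector `w` is efficient for `A` if any positive vector `v` whose associated
consistent matrix approximates `A` at least as well as that of `w` (entrywise) is a positive
multiple of `w`. -/
def IsEfficient {n : ℕ} (A : Matrix (Fin n) (Fin n) ℝ) (w : Fin n → ℝ) : Prop :=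
  PosVec w ∧ ∀ v : Fin n → ℝ, PosVec v →
    (∀ i j, |A i j - v i / v j| ≤ |A i j - w i / w j|) →
    ∃ c : ℝ, 0 < c ∧ v = c • w

/-- The `i`-th row sum of a matrix. -/
noncomputable def rowSum {n : ℕ} (A : Matrix (Fin n) (Fin n) ℝ) (i : Fin n) : ℝ := ∑ j, A i j

/-- Given the row sums `r` in nonincreasing order (`r 0` the largest), the auxiliary function
`f(x) = 1/x + ∑_{i=2}^{k} 1/(r₁ - rᵢ + x) + 1 - r₁ - x` (note the `i = 1` term of the sum is
`1/x` since `r 0 - r 0 = 0`). -/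
noncomputable def auxF {k : ℕ} (r : Fin (k + 1) → ℝ) (x : ℝ) : ℝ :=
  (∑ i, 1 / (r 0 - r i + x)) + 1 - r 0 - x

/-- A reciprocal matrix `B` is well-behaved if, with row sums `r₁ ≥ ⋯ ≥ r_k`, either
`r₁ - r_k ≥ 1` (type I), or `r₁ - r_k < 1` and `f(1 + r_k - r₁) ≥ 0` (type II). -/
def WellBehaved {k : ℕ} (B : Matrix (Fin (k + 1)) (Fin (k + 1)) ℝ) : Prop :=
  ∃ σ : Equiv.Perm (Fin (k + 1)), Antitone (rowSum B ∘ σ) ∧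
    (1 ≤ rowSum B (σ 0) - rowSum B (σ (Fin.last k)) ∨
      (rowSum B (σ 0) - rowSum B (σ (Fin.last k)) < 1 ∧
        0 ≤ auxF (rowSum B ∘ σ) (1 + rowSum B (σ (Fin.last k)) - rowSum B (σ 0))))

/-- For a reciprocal matrix `B` with row sums `r` in nonincreasing order and
`f(x) = 1/x + ∑_{i=2}^{k} 1/(r₁ - rᵢ + x) + 1 - r₁ - x`, we have `f(1) ≤ 0`, with equality
iff `B` is the all-ones matrix; in particular any positive zero of `f` is at most `1`. -/
theorem stmt6 {k : ℕ} (B : Matrix (Fin (k + 1)) (Fin (k + 1)) ℝ) (hB : IsReciprocal B)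
    (r : Fin (k + 1) → ℝ) (hr : Antitone r)
    (hperm : ∃ σ : Equiv.Perm (Fin (k + 1)), ∀ i, r i = rowSum B (σ i))
    (f : ℝ → ℝ) (hf : ∀ x : ℝ, f x = auxF r x) :
    f 1 ≤ 0 ∧ (f 1 = 0 ↔ ∀ i j, B i j = 1) ∧ ∀ x : ℝ, 0 < x → f x = 0 → x ≤ 1 := by
  obtain ⟨σ, hσ⟩ := hperm
  have hpos := hB.1
  have hrec := hB.2
  have h2 : ∀ i j, (2:ℝ) ≤ B i j + B j i := by
    intro i j
    have ht := hpos i j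
    rw [hrec i j]
    have : B i j + 1 / B i j - 2 = (B i j - 1)^2 / B i j := by field_simp; try ring
    rw [← sub_nonneg, this]
    positivity
  have hr0 : ∀ i, r i ≤ r 0 := fun i => hr (Fin.zero_le i)
  have hsum : ∑ i, r i = ∑ i, ∑ j, B i j := by
    calc ∑ i, r i = ∑ i, rowSum B (σ i) := by simp [hσ]
    _ = ∑ i, rowSum B i := Equiv.sum_comp σ _
    _ = _ := rfl
  have hswap : ∑ i, ∑ j, B j i = ∑ i, ∑ j, B i j := Finset.sum_comm
  have hKsq : ((k:ℝ)+1)^2 ≤ ∑ i, ∑ j, B i j := by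
    have h1 : ∑ i : Fin (k+1), ∑ j : Fin (k+1), (2:ℝ) ≤ ∑ i, ∑ j, (B i j + B j i) :=
      Finset.sum_le_sum fun i _ => Finset.sum_le_sum fun j _ => h2 i j
    have h3 : ∑ i : Fin (k+1), ∑ j : Fin (k+1), (2:ℝ) = 2 * ((k:ℝ)+1)^2 := by
      simp; try ring
    have h4 : ∑ i, ∑ j, (B i j + B j i) = 2 * ∑ i, ∑ j, B i j := by
      simp only [Finset.sum_add_distrib, hswap]; ring
    linarith
  have hr0K : ((k:ℝ)+1) ≤ r 0 := by
    have h5 : ∑ i, r i ≤ ∑ _i : Fin (k+1), r 0 := Finset.sum_le_sum fun i _ => hr0 i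
    have h6 : ∑ _i : Fin (k+1), r 0 = ((k:ℝ)+1) * r 0 := by simp; try ring
    nlinarith
  have hdpos : ∀ (i : Fin (k+1)) (x : ℝ), 0 < x → 0 < r 0 - r i + x := by
    intro i x hx
    have := hr0 i; linarith
  have hf1 : f 1 = (∑ i, 1 / (r 0 - r i + 1)) - r 0 := by
    rw [hf, auxF]; ring
  have hterm : ∀ i : Fin (k+1), 1 / (r 0 - r i + 1) ≤ 1 := by
    intro i
    rw [div_le_one (hdpos i 1 one_pos)]
    have := hr0 i; linarith
  have hsum1 : (∑ i, 1 / (r 0 - r i + 1)) ≤ (k:ℝ)+1 := by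
    calc (∑ i, 1 / (r 0 - r i + 1)) ≤ ∑ _i : Fin (k+1), (1:ℝ) :=
        Finset.sum_le_sum fun i _ => hterm i
    _ = (k:ℝ)+1 := by simp
  have hle : f 1 ≤ 0 := by rw [hf1]; linarith
  refine ⟨hle, ⟨?_, ?_⟩, ?_⟩
  · -- f 1 = 0 → all ones
    intro heq
    have hr0eq : r 0 ≤ (k:ℝ)+1 := by
      rw [hf1] at heq; linarith
    have hsumeq : ∑ i, ∑ j, B i j = ((k:ℝ)+1)^2 := by
      have h5 : ∑ i, r i ≤ ∑ _i : Fin (k+1), r 0 := Finset.sum_le_sum fun i _ => hr0 i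
      have h6 : ∑ _i : Fin (k+1), r 0 = ((k:ℝ)+1) * r 0 := by simp; try ring
      nlinarith
    -- each B i j + B j i = 2
    have hzero : ∑ i, ∑ j, (B i j + B j i - 2) = 0 := by
      have h4 : ∑ i, ∑ j, (B i j + B j i - 2)
          = 2 * (∑ i, ∑ j, B i j) - 2 * ((k:ℝ)+1)^2 := by
        simp only [Finset.sum_sub_distrib, Finset.sum_add_distrib, hswap]
        simp; try ring
      rw [h4, hsumeq]; ring
    have hpair : ∀ i j, B i j + B j i = 2 := by
      have hnn : ∀ i ∈ Finset.univ (α := Fin (k+1)),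
          0 ≤ ∑ j, (B i j + B j i - 2) :=
        fun i _ => Finset.sum_nonneg fun j _ => by have := h2 i j; linarith
      have h7 := (Finset.sum_eq_zero_iff_of_nonneg hnn).mp hzero
      intro i j
      have h8 := h7 i (Finset.mem_univ i)
      have h9 := (Finset.sum_eq_zero_iff_of_nonneg
        (fun j _ => by have := h2 i j; linarith)).mp h8 j (Finset.mem_univ j)
      linarith
    intro i j
    have h10 := hpair i j
    rw [hrec i j] at h10
    have ht := hpos i j
    have h11 : (B i j - 1)^2 = 0 := by field_simp at h10; nlinarith
    have := pow_eq_zero_iff (n := 2) (by norm_num) |>.mp h11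
    linarith
  · -- all ones → f 1 = 0
    intro hone
    have hri : ∀ i, r i = (k:ℝ)+1 := by
      intro i
      rw [hσ, rowSum]
      simp [hone]
    rw [hf1]
    simp [hri]
  · -- zero > 0 implies ≤ 1
    intro x hx hfx
    by_contra h
    push_neg at h
    have hfle : f x < f 1 := by
      rw [hf1, hf, auxF]
      have hsx : (∑ i, 1 / (r 0 - r i + x)) ≤ ∑ i, 1 / (r 0 - r i + 1) := by
        refine Finset.sum_le_sum fun i _ => ?_
        exact one_div_le_one_div_of_le (hdpos i 1 one_pos) (by linarith)
      linarith
    linarith
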